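/- For every x ∈ (0,1), the set P(x) = { x_{ℓ,d} : ℓ, d nonnegative integers } is a discrete subset of ℝ (every point of P(x) has a neighborhood containing no other point of P(x)) if and only if log(p/q)/log((1−q)/(1−p)) is a rational number. -/

import Mathlib

/-- The updated prior after `ℓ` likes and `d` dislikes. -/
noncomputable def updatedPrior (p q x : ℝ) (ℓ d : ℕ) : ℝ :=
  x * p ^ ℓ * (1 - p) ^ d /
    (x * p ^ ℓ * (1 - p) ^ d + (1 - x) * q ^ ℓ * (1 - q) ^ d)

noncomputable def sigx (x t : ℝ) : ℝ := x * Real.exp t / (x * Real.exp t + (1 - x))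

lemma sigx_strictMono {x : ℝ} (hx0 : 0 < x) (hx1 : x < 1) : StrictMono (sigx x) := by
  intro t s hts
  have h1x : 0 < 1 - x := by linarith
  have hdt : 0 < x * Real.exp t + (1 - x) := by positivity
  have hds : 0 < x * Real.exp s + (1 - x) := by positivity
  rw [sigx, sigx, div_lt_div_iff₀ hdt hds]
  have he : Real.exp t < Real.exp s := Real.exp_lt_exp.mpr hts
  nlinarith [mul_pos (mul_pos hx0 h1x) (sub_pos.mpr he)]

lemma sigx_zero {x : ℝ} : sigx x 0 = x := by
  simp [sigx]

lemma sigx_continuous {x : ℝ} (hx0 : 0 < x) (hx1 : x < 1) : Continuous (sigx x) := by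
  have h1x : 0 < 1 - x := by linarith
  apply Continuous.div (by continuity) (by continuity)
  intro t
  have := Real.exp_pos t
  positivity

lemma updatedPrior_eq_sigx {p q x : ℝ} (hq0 : 0 < q) (hqp : q < p) (hp1 : p < 1)
    (hx0 : 0 < x) (hx1 : x < 1) (ℓ d : ℕ) :
    updatedPrior p q x ℓ d =
      sigx x ((ℓ : ℝ) * Real.log (p / q) - (d : ℝ) * Real.log ((1 - q) / (1 - p))) := by
  have hp0 : 0 < p := lt_trans hq0 hqp
  have h1p : 0 < 1 - p := by linarith
  have h1q : 0 < 1 - q := by linarith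
  have h1x : 0 < 1 - x := by linarith
  have hexp : Real.exp ((ℓ : ℝ) * Real.log (p / q) - (d : ℝ) * Real.log ((1 - q) / (1 - p)))
      = (p / q) ^ ℓ * ((1 - p) / (1 - q)) ^ d := by
    rw [Real.exp_sub, Real.exp_nat_mul, Real.exp_nat_mul, Real.exp_log (by positivity),
      Real.exp_log (by positivity), div_eq_mul_inv, ← inv_pow, inv_div]
  rw [sigx, hexp, updatedPrior]
  have hden1 : 0 < x * p ^ ℓ * (1 - p) ^ d + (1 - x) * q ^ ℓ * (1 - q) ^ d := by positivity
  have hden2 : 0 < x * ((p / q) ^ ℓ * ((1 - p) / (1 - q)) ^ d) + (1 - x) := by positivity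
  rw [div_eq_div_iff hden1.ne' hden2.ne']
  rw [div_pow, div_pow]
  field_simp

lemma exists_small_combination {a b : ℝ} (ha : 0 < a) (hb : 0 < b)
    (hirr : ∀ r : ℚ, a / b ≠ (r : ℝ)) {ε : ℝ} (hε : 0 < ε) :
    ∃ ℓ d : ℕ, ((ℓ : ℝ) * a - (d : ℝ) * b ≠ 0 ∧ |(ℓ : ℝ) * a - (d : ℝ) * b| < ε) := by
  set ε' := min ε b / 2 with hε'def
  have hε'0 : 0 < ε' := by positivity
  have hε'b : ε' < b := by
    have : min ε b ≤ b := min_le_right _ _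
    simp only [hε'def]; linarith
  have hε'ε : ε' < ε := by
    have : min ε b ≤ ε := min_le_left _ _
    simp only [hε'def]; linarith
  rcases (AddSubgroup.closure ({a, b} : Set ℝ)).dense_or_cyclic with hd | ⟨c, hc⟩
  · have h2 : (ε' / 2 : ℝ) ∈ closure ((AddSubgroup.closure ({a, b} : Set ℝ) : Set ℝ)) := hd _
    rw [Metric.mem_closure_iff] at h2
    obtain ⟨g, hgmem, hgd⟩ := h2 (ε' / 2) (by positivity)
    rw [Real.dist_eq, abs_lt] at hgd
    have hg0 : 0 < g := by linarith [hgd.1, hgd.2]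
    have hgε : g < ε' := by linarith [hgd.1, hgd.2]
    rw [SetLike.mem_coe, AddSubgroup.mem_closure_pair] at hgmem
    obtain ⟨m, n, hmn⟩ := hgmem
    rw [zsmul_eq_mul, zsmul_eq_mul] at hmn
    rcases le_or_gt n 0 with hn | hn
    · have hnb : (n : ℝ) * b ≤ 0 := mul_nonpos_of_nonpos_of_nonneg (by exact_mod_cast hn) hb.le
      have hm : 0 < m := by
        by_contra hm
        push_neg at hm
        have : (m : ℝ) * a ≤ 0 := mul_nonpos_of_nonpos_of_nonneg (by exact_mod_cast hm) ha.le
        linarith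
      refine ⟨m.toNat, (-n).toNat, ?_, ?_⟩ <;>
        rw [show ((m.toNat : ℝ)) = (m : ℝ) by exact_mod_cast Int.toNat_of_nonneg hm.le,
          show (((-n).toNat : ℝ)) = ((-n : ℤ) : ℝ) by exact_mod_cast Int.toNat_of_nonneg (by omega)]
      · push_cast; linarith [hmn]
      · push_cast
        rw [show (m : ℝ) * a - -(n : ℝ) * b = g by linarith [hmn]]
        rw [abs_of_pos hg0]; linarith
    · have hm : m < 0 := by
        by_contra hm
        push_neg at hm
        have h1 : (1 : ℝ) ≤ (n : ℝ) := by exact_mod_cast hn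
        have h2' : (0 : ℝ) ≤ (m : ℝ) * a := mul_nonneg (by exact_mod_cast hm) ha.le
        nlinarith
      refine ⟨(-m).toNat, n.toNat, ?_, ?_⟩ <;>
        rw [show (((-m).toNat : ℝ)) = ((-m : ℤ) : ℝ) by exact_mod_cast Int.toNat_of_nonneg (by omega),
          show ((n.toNat : ℝ)) = (n : ℝ) by exact_mod_cast Int.toNat_of_nonneg hn.le]
      · push_cast; intro h; apply hg0.ne'; linarith [hmn]
      · push_cast
        rw [show -(m : ℝ) * a - (n : ℝ) * b = -g by linarith [hmn]]
        rw [abs_neg, abs_of_pos hg0]; linarith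
  · exfalso
    have haG : a ∈ AddSubgroup.closure ({a, b} : Set ℝ) :=
      AddSubgroup.subset_closure (by simp)
    have hbG : b ∈ AddSubgroup.closure ({a, b} : Set ℝ) :=
      AddSubgroup.subset_closure (by simp)
    rw [hc, AddSubgroup.mem_closure_singleton] at haG hbG
    obtain ⟨m, hm⟩ := haG
    obtain ⟨n, hn⟩ := hbG
    rw [zsmul_eq_mul] at hm hn
    have hc0 : c ≠ 0 := by rintro rfl; rw [mul_zero] at hn; exact hb.ne' hn.symm
    have hn0 : (n : ℝ) ≠ 0 := by rintro h; rw [h, zero_mul] at hn; exact hb.ne' hn.symm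
    apply hirr ((m : ℚ) / (n : ℚ))
    rw [← hm, ← hn]
    push_cast
    rw [mul_div_mul_right _ _ hc0]

lemma int_eq_of_close {k k' : ℤ} {t : ℝ} (ht : 0 < t)
    (h1 : (k : ℝ) * t - t / 2 < (k' : ℝ) * t) (h2 : (k' : ℝ) * t < (k : ℝ) * t + t / 2) :
    k' = k := by
  rcases lt_trichotomy k' k with h | h | h
  · exfalso
    have hle : (k' : ℝ) ≤ (k : ℝ) - 1 := by exact_mod_cast Int.le_sub_one_of_lt h
    nlinarith
  · exact h
  · exfalso
    have hle : (k : ℝ) + 1 ≤ (k' : ℝ) := by exact_mod_cast h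
    nlinarith

/-- The set of possible updated priors `P(x) = { x_{ℓ,d} : ℓ, d ∈ ℕ }` is a discrete
subset of ℝ (every point has a neighborhood containing no other point of the set)
if and only if `log(p/q)/log((1−q)/(1−p))` is rational. -/
theorem updatedPriors_discrete_iff_rational (p q : ℝ) (hq0 : 0 < q) (hqp : q < p)
    (hp1 : p < 1) (x : ℝ) (hx : x ∈ Set.Ioo (0 : ℝ) 1) :
    (∀ y ∈ {z : ℝ | ∃ ℓ d : ℕ, z = updatedPrior p q x ℓ d},
      ∃ U ∈ nhds y, ∀ z ∈ U, z ∈ {z : ℝ | ∃ ℓ d : ℕ, z = updatedPrior p q x ℓ d} → z = y)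
    ↔ ∃ r : ℚ, Real.log (p / q) / Real.log ((1 - q) / (1 - p)) = (r : ℝ) := by
  obtain ⟨hx0, hx1⟩ := hx
  set a := Real.log (p / q) with hadef
  set b := Real.log ((1 - q) / (1 - p)) with hbdef
  have hp0 : 0 < p := lt_trans hq0 hqp
  have h1p : 0 < 1 - p := by linarith
  have h1q : 0 < 1 - q := by linarith
  have ha : 0 < a := Real.log_pos ((one_lt_div hq0).mpr hqp)
  have hb : 0 < b := Real.log_pos ((one_lt_div h1p).mpr (by linarith))
  have hmem : ∀ ℓ d : ℕ, updatedPrior p q x ℓ d = sigx x ((ℓ : ℝ) * a - (d : ℝ) * b) :=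
    fun ℓ d => updatedPrior_eq_sigx hq0 hqp hp1 hx0 hx1 ℓ d
  have hsm := sigx_strictMono hx0 hx1
  constructor
  · intro hdisc
    by_contra hrat
    push_neg at hrat
    have h00 : updatedPrior p q x 0 0 = x := by
      rw [hmem 0 0]; norm_num [sigx_zero]
    obtain ⟨U, hU, hUuniq⟩ := hdisc x ⟨0, 0, h00.symm⟩
    have hc : ContinuousAt (sigx x) 0 := (sigx_continuous hx0 hx1).continuousAt
    have hU0 : (sigx x) ⁻¹' U ∈ nhds (0 : ℝ) :=
      hc.preimage_mem_nhds (by rwa [sigx_zero])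
    obtain ⟨δ, hδ0, hball⟩ := Metric.mem_nhds_iff.mp hU0
    obtain ⟨ℓ, d, hne, hlt⟩ := exists_small_combination ha hb hrat hδ0
    have hsU : sigx x ((ℓ : ℝ) * a - (d : ℝ) * b) ∈ U := by
      apply hball
      simp only [Metric.mem_ball, Real.dist_eq, sub_zero]
      exact hlt
    have hzeq : sigx x ((ℓ : ℝ) * a - (d : ℝ) * b) = x :=
      hUuniq _ hsU ⟨ℓ, d, (hmem ℓ d).symm⟩
    have : (ℓ : ℝ) * a - (d : ℝ) * b = 0 :=
      hsm.injective (hzeq.trans (sigx_zero (x := x)).symm)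
    exact hne this
  · rintro ⟨r, hr⟩
    have hbne : b ≠ 0 := ne_of_gt hb
    set t := b / (r.den : ℝ) with htdef
    have hden0 : (0 : ℝ) < (r.den : ℝ) := by exact_mod_cast r.pos
    have ht0 : 0 < t := div_pos hb hden0
    have ha_eq : a = (r : ℝ) * b := by
      field_simp at hr; linarith [hr]
    have key : ∀ ℓ d : ℕ, ∃ k : ℤ, (ℓ : ℝ) * a - (d : ℝ) * b = (k : ℝ) * t := by
      intro ℓ d
      refine ⟨(ℓ : ℤ) * r.num - (d : ℤ) * (r.den : ℤ), ?_⟩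
      have hnum : (r : ℝ) = (r.num : ℝ) / (r.den : ℝ) := by rw [Rat.cast_def]
      rw [ha_eq, hnum, htdef]
      push_cast
      field_simp
    intro y hy
    obtain ⟨ℓ, d, hy⟩ := hy
    set s := (ℓ : ℝ) * a - (d : ℝ) * b with hsdef
    have hys : y = sigx x s := by rw [hy, hmem ℓ d]
    obtain ⟨k, hk⟩ := key ℓ d
    refine ⟨Set.Ioo (sigx x (s - t / 2)) (sigx x (s + t / 2)), ?_, ?_⟩
    · apply isOpen_Ioo.mem_nhds
      rw [hys]
      exact ⟨hsm (by linarith), hsm (by linarith)⟩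
    · rintro z hz ⟨ℓ', d', hz'⟩
      obtain ⟨k', hk'⟩ := key ℓ' d'
      have hzs : z = sigx x ((ℓ' : ℝ) * a - (d' : ℝ) * b) := by rw [hz', hmem ℓ' d']
      rw [hzs] at hz
      have h1 : s - t / 2 < (ℓ' : ℝ) * a - (d' : ℝ) * b := hsm.lt_iff_lt.mp hz.1
      have h2 : (ℓ' : ℝ) * a - (d' : ℝ) * b < s + t / 2 := hsm.lt_iff_lt.mp hz.2
      rw [hk'] at h1 h2
      rw [hsdef, hk] at h1 h2
      have hkk : k' = k := int_eq_of_close ht0 h1 h2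
      have : (ℓ' : ℝ) * a - (d' : ℝ) * b = s := by rw [hk', hkk, hsdef, hk]
      rw [hzs, this, hys]
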